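/- Let 𝔅_1 be a collection of admissible n-subsets of [n] ∪ [n]* satisfying the Strong Exchange Property, fix i ∈ [n], and let 𝔅_2 = {(i,i*)·B : B ∈ 𝔅_1} (applying the transposition swapping i and i* elementwise). Then the exploded sum 𝔅_3 = {B ∪ {n+1} : B ∈ 𝔅_1} ∪ {B ∪ {(n+1)*} : B ∈ 𝔅_2} satisfies the Strong Exchange Property on [n+1] ∪ [n+1]*. -/
import Mathlib


/-- `J n` models `[n] ∪ [n]*` : the element `(i, false)` is `i` and `(i, true)` is `i*`. -/
abbrev J (n : ℕ) := Fin n × Bool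

/-- The star involution `i ↦ i*`, `i* ↦ i`. -/
def jstar {n : ℕ} (x : J n) : J n := (x.1, !x.2)

/-- `K* = { k* : k ∈ K }`. -/
def starSet {n : ℕ} (K : Finset (J n)) : Finset (J n) := K.image jstar

/-- A subset `K ⊆ [n] ∪ [n]*` is admissible if `K ∩ K* = ∅`. -/
def Admissible {n : ℕ} (K : Finset (J n)) : Prop := K ∩ starSet K = ∅

/-- The Strong Exchange Property for a collection of subsets of `[n] ∪ [n]*`. -/
def StrongExchange {n : ℕ} (𝔅 : Set (Finset (J n))) : Prop :=
  ∀ A ∈ 𝔅, ∀ C ∈ 𝔅, ∀ a ∈ symmDiff A C, ∃ b ∈ C \ A, b ≠ jstar a ∧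
    symmDiff A {a, b, jstar a, jstar b} ∈ 𝔅 ∧ symmDiff C {a, b, jstar a, jstar b} ∈ 𝔅

/-- Inclusion of `[n] ∪ [n]*` into `[n+1] ∪ [n+1]*`. -/
def jlift {n : ℕ} (x : J n) : J (n + 1) := (x.1.castSucc, x.2)

/-- The exploded sum `𝔅₃` of two collections of admissible `n`-subsets of `[n] ∪ [n]*`:
`{B ∪ {n+1} : B ∈ 𝔅₁} ∪ {B ∪ {(n+1)*} : B ∈ 𝔅₂}`. -/
def explodedSum {n : ℕ} (𝔅₁ 𝔅₂ : Set (Finset (J n))) : Set (Finset (J (n + 1))) :=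
  {C | ∃ B ∈ 𝔅₁, C = insert (Fin.last n, false) (B.image jlift)} ∪
  {C | ∃ B ∈ 𝔅₂, C = insert (Fin.last n, true) (B.image jlift)}

section Helpers
variable {n : ℕ}

lemma jstar_jstar (x : J n) : jstar (jstar x) = x := by simp [jstar]

lemma jlift_injective : Function.Injective (jlift (n := n)) := by
  intro a b h
  simp only [jlift, Prod.mk.injEq, Fin.castSucc_inj] at h
  exact Prod.ext h.1 h.2

lemma last_ne_jlift (b : Bool) (x : J n) : ((Fin.last n, b) : J (n+1)) ≠ jlift x := by
  have h1 : (Fin.last n) ≠ x.1.castSucc := (Fin.castSucc_lt_last x.1).ne'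
  simp [jlift, Prod.ext_iff, h1]

lemma jlift_jstar (x : J n) : jlift (jstar x) = jstar (jlift x) := rfl

lemma mem_image_jlift (B : Finset (J n)) (x : J n) : jlift x ∈ B.image jlift ↔ x ∈ B := by
  constructor
  · intro h
    obtain ⟨y, hy, he⟩ := Finset.mem_image.mp h
    exact jlift_injective he ▸ hy
  · intro h; exact Finset.mem_image_of_mem _ h

lemma last_notMem_image_jlift (b : Bool) (B : Finset (J n)) :
    ((Fin.last n, b) : J (n+1)) ∉ B.image jlift := by
  intro h
  obtain ⟨x, _, hx⟩ := Finset.mem_image.mp h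
  exact last_ne_jlift b x hx.symm

lemma masterA (β : Bool) (B S : Finset (J n)) :
    symmDiff (insert ((Fin.last n, β) : J (n+1)) (B.image jlift)) (S.image jlift)
      = insert (Fin.last n, β) ((symmDiff B S).image jlift) := by
  ext y
  by_cases h : y.1 = Fin.last n
  · have hy : ∀ (T : Finset (J n)), y ∉ T.image jlift := by
      intro T hT
      obtain ⟨x, _, hx⟩ := Finset.mem_image.mp hT
      rw [← hx] at h
      exact (Fin.castSucc_lt_last x.1).ne h
    simp [Finset.mem_symmDiff, hy]
  · obtain ⟨x, rfl⟩ : ∃ x, y = jlift x :=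
      ⟨(y.1.castPred h, y.2), by simp [jlift, Fin.castSucc_castPred]⟩
    simp only [Finset.mem_insert, mem_image_jlift, Finset.mem_symmDiff,
      (last_ne_jlift β x).symm, false_or]
    --tauto

end Helpers

section Helpers2
variable {n : ℕ}

lemma jlift_ne_last (b : Bool) (x : J n) : jlift x ≠ ((Fin.last n, b) : J (n+1)) :=
  (last_ne_jlift b x).symm

lemma masterB (β : Bool) (B S : Finset (J n)) :
    symmDiff (insert ((Fin.last n, β) : J (n+1)) (B.image jlift))
        (insert ((Fin.last n, false) : J (n+1)) (insert (Fin.last n, true) (S.image jlift)))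
      = insert (Fin.last n, !β) ((symmDiff B S).image jlift) := by
  ext y
  by_cases h : y.1 = Fin.last n
  · have hy : ∀ (T : Finset (J n)), y ∉ T.image jlift := by
      intro T hT
      obtain ⟨x, _, hx⟩ := Finset.mem_image.mp hT
      rw [← hx] at h
      exact (Fin.castSucc_lt_last x.1).ne h
    have hy2 : y = (Fin.last n, y.2) := Prod.ext h rfl
    rw [hy2]
    simp only [Finset.mem_symmDiff, Finset.mem_insert, hy _, or_false, Prod.mk.injEq, true_and]
    cases y.2 <;> cases β <;> simp [jlift_ne_last]
  · obtain ⟨x, rfl⟩ : ∃ x, y = jlift x :=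
      ⟨(y.1.castPred h, y.2), by simp [jlift, Fin.castSucc_castPred]⟩
    simp only [Finset.mem_insert, mem_image_jlift, Finset.mem_symmDiff,
      (last_ne_jlift β x).symm, (last_ne_jlift false x).symm, (last_ne_jlift true x).symm,
      (last_ne_jlift (!β) x).symm, false_or]

end Helpers2

section Sigma
variable {n : ℕ} (i : Fin n)

local notation "σ" => Equiv.swap ((i, false) : J n) ((i, true) : J n)

lemma sigma_sigma (x : J n) : σ (σ x) = x := Equiv.swap_apply_self _ _ x

lemma sigma_fst (x : J n) : (σ x).1 = x.1 := by
  rcases x with ⟨x1, x2⟩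
  by_cases h : x1 = i
  · subst h; cases x2 <;> simp [Equiv.swap_apply_left, Equiv.swap_apply_right]
  · rw [Equiv.swap_apply_of_ne_of_ne (by simp [h]) (by simp [h])]

lemma sigma_fix (x : J n) (h : x.1 ≠ i) : σ x = x :=
  Equiv.swap_apply_of_ne_of_ne (fun he => h (by rw [he])) (fun he => h (by rw [he]))

lemma sigma_jstar (x : J n) : σ (jstar x) = jstar (σ x) := by
  rcases x with ⟨x1, x2⟩
  by_cases h : x1 = i
  · subst h; cases x2 <;> simp [jstar, Equiv.swap_apply_left, Equiv.swap_apply_right]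
  · rw [sigma_fix i _ h, sigma_fix i _ (by simpa [jstar] using h)]

lemma mem_image_sigma (B : Finset (J n)) (x : J n) : x ∈ B.image σ ↔ σ x ∈ B := by
  constructor
  · intro h
    obtain ⟨y, hy, rfl⟩ := Finset.mem_image.mp h
    rwa [sigma_sigma]
  · intro h
    exact Finset.mem_image.mpr ⟨σ x, h, sigma_sigma i x⟩

lemma image_sigma_image_sigma (B : Finset (J n)) : (B.image σ).image σ = B := by
  ext x
  rw [mem_image_sigma, mem_image_sigma, sigma_sigma]

lemma image_sigma_symmDiff (X Y : Finset (J n)) :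
    (symmDiff X Y).image σ = symmDiff (X.image σ) (Y.image σ) := by
  ext x
  simp only [mem_image_sigma, Finset.mem_symmDiff]

lemma image_sigma_of_ne (S : Finset (J n)) (hS : ∀ x ∈ S, x.1 ≠ i) : S.image σ = S := by
  ext x
  rw [mem_image_sigma]
  constructor
  · intro h
    have : (σ x).1 ≠ i := hS _ h
    rw [sigma_fst] at this
    rwa [sigma_fix i x this] at h
  · intro h
    rwa [sigma_fix i x (hS x h)]

lemma image_sigma_eq_symmDiff (B : Finset (J n)) (hfull : ((i, false) ∈ B ↔ (i, true) ∉ B)) :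
    B.image σ = symmDiff B {(i, false), (i, true)} := by
  ext x
  rw [mem_image_sigma]
  by_cases h : x.1 = i
  · rcases x with ⟨x1, x2⟩
    simp only at h
    subst h
    cases x2 <;>
      simp [Equiv.swap_apply_left, Equiv.swap_apply_right, Finset.mem_symmDiff] <;> tauto
  · rw [sigma_fix i x h]
    simp only [Finset.mem_symmDiff, Finset.mem_insert, Finset.mem_singleton]
    have h1 : x ≠ (i, false) := fun he => h (by rw [he])
    have h2 : x ≠ (i, true) := fun he => h (by rw [he])
    simp [h1, h2]

end Sigma

section Pairs
variable {n : ℕ}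

lemma admissible_not_both {B : Finset (J n)} (hB : Admissible B) :
    ∀ x ∈ B, jstar x ∉ B := by
  intro x hx hx'
  have h1 : jstar x ∈ starSet B := Finset.mem_image_of_mem _ hx
  have h2 : jstar x ∈ B ∩ starSet B := Finset.mem_inter.mpr ⟨hx', h1⟩
  rw [Admissible] at hB
  rw [hB] at h2
  exact absurd h2 (Finset.notMem_empty _)

lemma onePair {B : Finset (J n)} (hB : Admissible B) (hc : B.card = n) :
    ∀ j : Fin n, ((j, false) ∈ B ↔ (j, true) ∉ B) := by
  have hinj : Set.InjOn Prod.fst (B : Set (J n)) := by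
    intro p hp q hq h
    rcases p with ⟨p1, p2⟩
    rcases q with ⟨q1, q2⟩
    simp only at h
    subst h
    by_cases h2 : p2 = q2
    · rw [h2]
    · exfalso
      have : q2 = !p2 := by cases p2 <;> cases q2 <;> simp_all
      subst this
      exact admissible_not_both hB (p1, p2) hp hq
  have hcard : (B.image Prod.fst).card = n := by
    rw [Finset.card_image_of_injOn hinj, hc]
  have huniv : B.image Prod.fst = Finset.univ :=
    Finset.eq_univ_of_card _ (by rw [hcard, Fintype.card_fin])
  intro j
  constructor
  · intro h0
    exact admissible_not_both hB (j, false) h0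
  · intro h1
    have hj : j ∈ B.image Prod.fst := by rw [huniv]; exact Finset.mem_univ j
    obtain ⟨p, hp, hpj⟩ := Finset.mem_image.mp hj
    rcases p with ⟨p1, p2⟩
    simp only at hpj
    subst hpj
    cases p2
    · exact hp
    · exact absurd hp h1

end Pairs

section NoSigma
variable {n : ℕ} (i : Fin n)

local notation "σ" => Equiv.swap ((i, false) : J n) ((i, true) : J n)

lemma not_image_sigma_mem (𝔅₁ : Set (Finset (J n)))
    (hadm : ∀ B ∈ 𝔅₁, Admissible B ∧ B.card = n)
    (hSE : StrongExchange 𝔅₁) {B : Finset (J n)} (hB : B ∈ 𝔅₁) :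
    B.image σ ∉ 𝔅₁ := by
  intro h
  have hfull := onePair (hadm B hB).1 (hadm B hB).2 i
  obtain ⟨d, hd1, hd2⟩ : ∃ d, d ∈ B ∧ ({(i, false), (i, true)} : Finset (J n)) = {d, jstar d} := by
    by_cases hc : (i, false) ∈ B
    · exact ⟨(i, false), hc, rfl⟩
    · refine ⟨(i, true), by tauto, ?_⟩
      show ({(i, false), (i, true)} : Finset (J n)) = {(i, true), (i, false)}
      exact Finset.pair_comm _ _
  have him : B.image σ = symmDiff B {(i, false), (i, true)} := image_sigma_eq_symmDiff i B hfull
  have hsd : symmDiff B (B.image σ) = {(i, false), (i, true)} := by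
    rw [him, symmDiff_symmDiff_cancel_left]
  have hdm : d ∈ symmDiff B (B.image σ) := by
    rw [hsd, hd2]; exact Finset.mem_insert_self _ _
  obtain ⟨b, hbmem, hbne, -, -⟩ := hSE B hB (B.image σ) h d hdm
  rw [Finset.mem_sdiff] at hbmem
  have hbP : b ∈ ({(i, false), (i, true)} : Finset (J n)) := by
    have : b ∈ symmDiff B (B.image σ) := by
      rw [Finset.mem_symmDiff]; tauto
    rwa [hsd] at this
  rw [hd2, Finset.mem_insert, Finset.mem_singleton] at hbP
  rcases hbP with rfl | rfl
  · exact hbmem.2 hd1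
  · exact hbne rfl

end NoSigma

section MoreHelpers
variable {n : ℕ} (i : Fin n)

local notation "σ" => Equiv.swap ((i, false) : J n) ((i, true) : J n)

lemma jstar_fst (x : J n) : (jstar x).1 = x.1 := rfl

lemma sigma_eq_jstar (x : J n) (h : x.1 = i) : σ x = jstar x := by
  rcases x with ⟨x1, x2⟩
  simp only at h
  subst h
  cases x2 <;> simp [jstar, Equiv.swap_apply_left, Equiv.swap_apply_right]

lemma pair_eq (x : J n) (h : x.1 = i) :
    ({x, jstar x} : Finset (J n)) = {(i, false), (i, true)} := by
  rcases x with ⟨x1, x2⟩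
  simp only at h
  subst h
  cases x2 <;> simp [jstar, Finset.pair_comm]

lemma image_sigma_pair :
    (({(i, false), (i, true)} : Finset (J n))).image σ = {(i, false), (i, true)} := by
  simp [Finset.image_insert, Equiv.swap_apply_left, Equiv.swap_apply_right, Finset.pair_comm]

lemma fst_eq_ne (x y : J n) (h1 : x.1 = y.1) (h2 : x ≠ y) : x = jstar y := by
  rcases x with ⟨x1, x2⟩
  rcases y with ⟨y1, y2⟩
  simp only at h1
  subst h1
  cases x2 <;> cases y2 <;> simp_all [jstar]

lemma pair_mem_of_not {B : Finset (J n)} (hfull : ((i, false) ∈ B ↔ (i, true) ∉ B))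
    (d : J n) (h : d.1 = i) (hd : d ∉ B) : jstar d ∈ B := by
  rcases d with ⟨d1, d2⟩
  simp only at h
  subst h
  cases d2 <;> simp_all [jstar] <;> try tauto

lemma exists_pair_elt {B : Finset (J n)} (hfull : ((i, false) ∈ B ↔ (i, true) ∉ B)) :
    ∃ d : J n, d.1 = i ∧ d ∈ B ∧ jstar d ∉ B := by
  by_cases h : (i, false) ∈ B
  · exact ⟨(i, false), rfl, h, by simpa [jstar] using hfull.mp h⟩
  · exact ⟨(i, true), rfl, by tauto, by simpa [jstar] using h⟩

lemma symmDiff_pairs_disjoint (x y : J n) (h : x.1 ≠ y.1) :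
    symmDiff ({x, jstar x} : Finset (J n)) {y, jstar y} = {x, y, jstar x, jstar y} := by
  have h1 : x ≠ y := fun he => h (by rw [he])
  have h2 : x ≠ jstar y := fun he => h (by rw [he, jstar_fst])
  have h3 : jstar x ≠ y := fun he => h (by rw [← jstar_fst x, he])
  have h4 : jstar x ≠ jstar y := fun he => h (by rw [← jstar_fst x, he, jstar_fst])
  ext z
  simp only [Finset.mem_symmDiff, Finset.mem_insert, Finset.mem_singleton]
  constructor
  · tauto
  · rintro (rfl | rfl | rfl | rfl) <;> simp [h1, h2, h3, h4, h1.symm, h2.symm, h3.symm, h4.symm]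

lemma dup4 (x : J n) : ({x, x, jstar x, jstar x} : Finset (J n)) = {x, jstar x} := by
  ext z; simp; try tauto

lemma image_sigma_T (a' b' : J n) (ha : a'.1 ≠ i) (hb : b'.1 ≠ i) :
    (({a', b', jstar a', jstar b'} : Finset (J n))).image σ = {a', b', jstar a', jstar b'} := by
  apply image_sigma_of_ne
  intro x hx
  simp only [Finset.mem_insert, Finset.mem_singleton] at hx
  rcases hx with rfl | rfl | rfl | rfl <;> simp [jstar_fst, ha, hb]

lemma image_sigma_pair2 (a' : J n) (ha : a'.1 ≠ i) :
    (({a', jstar a'} : Finset (J n))).image σ = {a', jstar a'} := by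
  apply image_sigma_of_ne
  intro x hx
  simp only [Finset.mem_insert, Finset.mem_singleton] at hx
  rcases hx with rfl | rfl <;> simp [jstar_fst, ha]

end MoreHelpers

section Toggles
variable {n : ℕ}

lemma toggleLL (a' b' : J n) :
    ({jlift a', jlift b', jstar (jlift a'), jstar (jlift b')} : Finset (J (n+1)))
      = (({a', b', jstar a', jstar b'} : Finset (J n))).image jlift := by
  simp [Finset.image_insert, Finset.image_singleton, jlift_jstar]

lemma toggleSB (β : Bool) (b' : J n) :
    ({((Fin.last n, β) : J (n+1)), jlift b', jstar ((Fin.last n, β) : J (n+1)), jstar (jlift b')} : Finset (J (n+1)))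
      = insert (Fin.last n, false) (insert (Fin.last n, true)
          ((({b', jstar b'} : Finset (J n))).image jlift)) := by
  cases β <;>
    · ext x
      simp [jstar, Finset.image_insert, jlift_jstar, Finset.mem_insert]
      try tauto

lemma toggleLB (β : Bool) (a' : J n) :
    ({jlift a', ((Fin.last n, β) : J (n+1)), jstar (jlift a'), jstar ((Fin.last n, β) : J (n+1))} : Finset (J (n+1)))
      = insert (Fin.last n, false) (insert (Fin.last n, true)
          ((({a', jstar a'} : Finset (J n))).image jlift)) := by
  cases β <;>
    · ext x
      simp [jstar, Finset.image_insert, jlift_jstar, Finset.mem_insert]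
      try tauto

lemma mem_insert_lift (β : Bool) (B : Finset (J n)) (x : J n) :
    jlift x ∈ insert ((Fin.last n, β) : J (n+1)) (B.image jlift) ↔ x ∈ B := by
  rw [Finset.mem_insert, mem_image_jlift]
  simp [jlift_ne_last]

lemma last_mem_insert_lift (β b : Bool) (B : Finset (J n)) :
    ((Fin.last n, b) : J (n+1)) ∈ insert ((Fin.last n, β) : J (n+1)) (B.image jlift) ↔ b = β := by
  rw [Finset.mem_insert]
  simp [last_notMem_image_jlift, Prod.mk.injEq, jlift_ne_last]

lemma symmDiff_insert_lift_cases {β₁ β₂ : Bool} {B1 B2 : Finset (J n)} {a : J (n+1)}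
    (ha : a ∈ symmDiff (insert ((Fin.last n, β₁) : J (n+1)) (B1.image jlift))
      (insert ((Fin.last n, β₂) : J (n+1)) (B2.image jlift))) :
    (∃ a', a = jlift a' ∧ a' ∈ symmDiff B1 B2) ∨ (β₁ ≠ β₂ ∧ (a = (Fin.last n, β₁) ∨ a = (Fin.last n, β₂))) := by
  rw [Finset.mem_symmDiff] at ha
  by_cases h : a.1 = Fin.last n
  · right
    have hy : ∀ (T : Finset (J n)), a ∉ T.image jlift := by
      intro T hT
      obtain ⟨x, _, hx⟩ := Finset.mem_image.mp hT
      rw [← hx] at h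
      exact (Fin.castSucc_lt_last x.1).ne h
    rcases ha with ⟨h1, h2⟩ | ⟨h1, h2⟩
    · rw [Finset.mem_insert] at h1
      rcases h1 with rfl | h1
      · refine ⟨?_, Or.inl rfl⟩
        intro he
        exact h2 (by rw [he]; exact Finset.mem_insert_self _ _)
      · exact absurd h1 (hy _)
    · rw [Finset.mem_insert] at h1
      rcases h1 with rfl | h1
      · refine ⟨?_, Or.inr rfl⟩
        intro he
        exact h2 (by rw [← he]; exact Finset.mem_insert_self _ _)
      · exact absurd h1 (hy _)
  · left
    obtain ⟨x, rfl⟩ : ∃ x, a = jlift x :=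
      ⟨(a.1.castPred h, a.2), by simp [jlift, Fin.castSucc_castPred]⟩
    refine ⟨x, rfl, ?_⟩
    rw [mem_insert_lift, mem_insert_lift] at ha
    rwa [Finset.mem_symmDiff]

end Toggles

/-- if `𝔅₁` satisfies the Strong Exchange Property and
`𝔅₂ = (i, i*)·𝔅₁` (the transposition swapping `i` and `i*` applied elementwise), then the
exploded sum of `𝔅₁` and `𝔅₂` satisfies the Strong Exchange Property on
`[n+1] ∪ [n+1]*`. -/
theorem transposed_exploded_sum_strong_exchange (n : ℕ) (𝔅₁ : Set (Finset (J n)))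
    (hadm : ∀ B ∈ 𝔅₁, Admissible B ∧ B.card = n)
    (hSE : StrongExchange 𝔅₁) (i : Fin n)
    (𝔅₂ : Set (Finset (J n)))
    (h₂ : 𝔅₂ = {C | ∃ B ∈ 𝔅₁, C = B.image (Equiv.swap (i, false) (i, true))}) :
    StrongExchange (explodedSum 𝔅₁ 𝔅₂) := by
  subst h₂
  have hB2I : ∀ X : Finset (J n), X.image (Equiv.swap ((i, false) : J n) (i, true)) ∈ 𝔅₁ →
      X ∈ {C | ∃ B ∈ 𝔅₁, C = B.image (Equiv.swap ((i, false) : J n) (i, true))} :=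
    fun X h => ⟨_, h, (image_sigma_image_sigma i X).symm⟩
  intro A hA C hC a ha
  rcases hA with ⟨BA, hBA, rfl⟩ | ⟨DA, hDA, rfl⟩
  · rcases hC with ⟨BC, hBC, rfl⟩ | ⟨DC, hDC, rfl⟩
    · -- CASE 1 : both from the 𝔅₁ side
      rcases symmDiff_insert_lift_cases ha with ⟨a', rfl, ha'⟩ | ⟨hne, -⟩
      · obtain ⟨b', hb', hbne', hA', hC'⟩ := hSE BA hBA BC hBC a' ha'
        rw [Finset.mem_sdiff] at hb'
        refine ⟨jlift b', ?_, ?_, ?_, ?_⟩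
        · rw [Finset.mem_sdiff, mem_insert_lift, mem_insert_lift]
          exact hb'
        · rw [← jlift_jstar]
          exact fun h => hbne' (jlift_injective h)
        · rw [toggleLL, masterA]
          exact Set.mem_union_left _ ⟨_, hA', rfl⟩
        · rw [toggleLL, masterA]
          exact Set.mem_union_left _ ⟨_, hC', rfl⟩
      · exact absurd rfl hne
    · -- CASE 2 : A from 𝔅₁ side, C from 𝔅₂ side
      obtain ⟨BC, hBC, rfl⟩ := hDC
      have hfullA := onePair (hadm BA hBA).1 (hadm BA hBA).2
      have hfullC := onePair (hadm BC hBC).1 (hadm BC hBC).2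
      have hsigA : BA.image (Equiv.swap ((i, false) : J n) (i, true))
          = symmDiff BA {(i, false), (i, true)} := image_sigma_eq_symmDiff i BA (hfullA i)
      have hsigC : BC.image (Equiv.swap ((i, false) : J n) (i, true))
          = symmDiff BC {(i, false), (i, true)} := image_sigma_eq_symmDiff i BC (hfullC i)
      rcases symmDiff_insert_lift_cases ha with ⟨a', rfl, ha'⟩ | ⟨-, hfa⟩
      · by_cases hpi : a'.1 = i
        · refine ⟨(Fin.last n, true), ?_, ?_, ?_, ?_⟩
          · rw [Finset.mem_sdiff, last_mem_insert_lift, last_mem_insert_lift]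
            simp
          · rw [← jlift_jstar]
            exact last_ne_jlift true (jstar a')
          · rw [toggleLB, masterB, pair_eq i a' hpi]
            refine Set.mem_union_right _ ⟨_, hB2I _ ?_, rfl⟩
            rw [image_sigma_symmDiff, hsigA, image_sigma_pair, symmDiff_symmDiff_cancel_right]
            exact hBA
          · rw [toggleLB, masterB, pair_eq i a' hpi, hsigC, symmDiff_symmDiff_cancel_right]
            exact Set.mem_union_left _ ⟨_, hBC, rfl⟩
        · have ha'' : a' ∈ symmDiff BA BC := by
            rw [Finset.mem_symmDiff] at ha' ⊢
            rw [mem_image_sigma, sigma_fix i a' hpi] at ha'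
            exact ha'
          obtain ⟨b', hb', hbne', hA', hC'⟩ := hSE BA hBA BC hBC a' ha''
          rw [Finset.mem_sdiff] at hb'
          by_cases hbp : b'.1 = i
          · have hT2 : symmDiff ({a', jstar a'} : Finset (J n)) {(i, false), (i, true)}
                = {a', b', jstar a', jstar b'} := by
              rw [← pair_eq i b' hbp, symmDiff_pairs_disjoint a' b' (by rw [hbp]; exact hpi)]
            have hKey1 : symmDiff (symmDiff BA {((i, false) : J n), (i, true)}) {a', jstar a'}
                = symmDiff BA ({a', b', jstar a', jstar b'} : Finset (J n)) := by
              rw [symmDiff_assoc,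
                symmDiff_comm ({((i, false) : J n), (i, true)} : Finset (J n))
                  ({a', jstar a'} : Finset (J n)), hT2]
            have hKey2 : symmDiff (symmDiff BC {((i, false) : J n), (i, true)}) {a', jstar a'}
                = symmDiff BC ({a', b', jstar a', jstar b'} : Finset (J n)) := by
              rw [symmDiff_assoc,
                symmDiff_comm ({((i, false) : J n), (i, true)} : Finset (J n))
                  ({a', jstar a'} : Finset (J n)), hT2]
            refine ⟨(Fin.last n, true), ?_, ?_, ?_, ?_⟩
            · rw [Finset.mem_sdiff, last_mem_insert_lift, last_mem_insert_lift]
              simp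
            · rw [← jlift_jstar]
              exact last_ne_jlift true (jstar a')
            · rw [toggleLB, masterB]
              refine Set.mem_union_right _ ⟨_, hB2I _ ?_, rfl⟩
              rw [image_sigma_symmDiff, hsigA, image_sigma_pair2 i a' hpi, hKey1]
              exact hA'
            · rw [toggleLB, masterB, hsigC, hKey2]
              exact Set.mem_union_left _ ⟨_, hC', rfl⟩
          · refine ⟨jlift b', ?_, ?_, ?_, ?_⟩
            · rw [Finset.mem_sdiff, mem_insert_lift, mem_insert_lift, mem_image_sigma,
                sigma_fix i b' hbp]
              exact hb'
            · rw [← jlift_jstar]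
              exact fun h => hbne' (jlift_injective h)
            · rw [toggleLL, masterA]
              exact Set.mem_union_left _ ⟨_, hA', rfl⟩
            · rw [toggleLL, masterA]
              refine Set.mem_union_right _ ⟨_, hB2I _ ?_, rfl⟩
              rw [image_sigma_symmDiff, image_sigma_image_sigma, image_sigma_T i a' b' hpi hbp]
              exact hC'
      · obtain ⟨β, rfl⟩ : ∃ β, a = ((Fin.last n, β) : J (n+1)) := by
          rcases hfa with rfl | rfl
          exacts [⟨false, rfl⟩, ⟨true, rfl⟩]
        obtain ⟨dA, hdA1, hdA2, hdA3⟩ := exists_pair_elt i (hfullA i)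
        have hjfst : (jstar dA).1 = i := by rw [jstar_fst]; exact hdA1
        by_cases hd : dA ∈ BC
        · refine ⟨jlift (jstar dA), ?_, ?_, ?_, ?_⟩
          · rw [Finset.mem_sdiff, mem_insert_lift, mem_insert_lift, mem_image_sigma,
              sigma_eq_jstar i (jstar dA) hjfst, jstar_jstar]
            exact ⟨hd, hdA3⟩
          · exact jlift_ne_last _ _
          · rw [toggleSB, masterB, pair_eq i (jstar dA) hjfst]
            refine Set.mem_union_right _ ⟨_, hB2I _ ?_, rfl⟩
            rw [image_sigma_symmDiff, hsigA, image_sigma_pair, symmDiff_symmDiff_cancel_right]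
            exact hBA
          · rw [toggleSB, masterB, pair_eq i (jstar dA) hjfst, hsigC,
              symmDiff_symmDiff_cancel_right]
            exact Set.mem_union_left _ ⟨_, hBC, rfl⟩
        · have hjC : jstar dA ∈ BC := pair_mem_of_not i (hfullC i) dA hdA1 hd
          have hsd : jstar dA ∈ symmDiff BA BC :=
            Finset.mem_symmDiff.mpr (Or.inr ⟨hjC, hdA3⟩)
          obtain ⟨b', hb', hbne', hA', hC'⟩ := hSE BA hBA BC hBC (jstar dA) hsd
          rw [Finset.mem_sdiff] at hb'
          rw [jstar_jstar] at hbne'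
          have hbp : b'.1 ≠ i := by
            intro hbp
            have hbd : b' = jstar dA := by
              apply fst_eq_ne
              · rw [hbp]; exact hdA1.symm
              · exact hbne'
            rw [hbd] at hA'
            rw [dup4, pair_eq i (jstar dA) hjfst, ← hsigA] at hA'
            exact not_image_sigma_mem i 𝔅₁ hadm hSE hBA hA'
          have hT2 : symmDiff ({((i, false) : J n), (i, true)} : Finset (J n)) {b', jstar b'}
              = {jstar dA, b', jstar (jstar dA), jstar b'} := by
            rw [← pair_eq i (jstar dA) hjfst,
              symmDiff_pairs_disjoint (jstar dA) b' (by rw [hjfst]; exact fun h => hbp h.symm)]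
          have hKey1 : symmDiff (symmDiff BA {((i, false) : J n), (i, true)}) {b', jstar b'}
              = symmDiff BA ({jstar dA, b', jstar (jstar dA), jstar b'} : Finset (J n)) := by
            rw [symmDiff_assoc, hT2]
          have hKey2 : symmDiff (symmDiff BC {((i, false) : J n), (i, true)}) {b', jstar b'}
              = symmDiff BC ({jstar dA, b', jstar (jstar dA), jstar b'} : Finset (J n)) := by
            rw [symmDiff_assoc, hT2]
          refine ⟨jlift b', ?_, ?_, ?_, ?_⟩
          · rw [Finset.mem_sdiff, mem_insert_lift, mem_insert_lift, mem_image_sigma,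
              sigma_fix i b' hbp]
            exact hb'
          · exact jlift_ne_last _ _
          · rw [toggleSB, masterB]
            refine Set.mem_union_right _ ⟨_, hB2I _ ?_, rfl⟩
            rw [image_sigma_symmDiff, hsigA, image_sigma_pair2 i b' hbp, hKey1]
            exact hA'
          · rw [toggleSB, masterB, hsigC, hKey2]
            exact Set.mem_union_left _ ⟨_, hC', rfl⟩
  · rcases hC with ⟨BC, hBC, rfl⟩ | ⟨DC, hDC, rfl⟩
    · -- CASE 3 : A from 𝔅₂ side, C from 𝔅₁ side
      obtain ⟨BA, hBA, rfl⟩ := hDA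
      have hfullA := onePair (hadm BA hBA).1 (hadm BA hBA).2
      have hfullC := onePair (hadm BC hBC).1 (hadm BC hBC).2
      have hsigA : BA.image (Equiv.swap ((i, false) : J n) (i, true))
          = symmDiff BA {(i, false), (i, true)} := image_sigma_eq_symmDiff i BA (hfullA i)
      have hsigC : BC.image (Equiv.swap ((i, false) : J n) (i, true))
          = symmDiff BC {(i, false), (i, true)} := image_sigma_eq_symmDiff i BC (hfullC i)
      rcases symmDiff_insert_lift_cases ha with ⟨a', rfl, ha'⟩ | ⟨-, hfa⟩
      · by_cases hpi : a'.1 = i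
        · refine ⟨(Fin.last n, false), ?_, ?_, ?_, ?_⟩
          · rw [Finset.mem_sdiff, last_mem_insert_lift, last_mem_insert_lift]
            simp
          · rw [← jlift_jstar]
            exact last_ne_jlift false (jstar a')
          · rw [toggleLB, masterB, pair_eq i a' hpi, hsigA, symmDiff_symmDiff_cancel_right]
            exact Set.mem_union_left _ ⟨_, hBA, rfl⟩
          · rw [toggleLB, masterB, pair_eq i a' hpi]
            refine Set.mem_union_right _ ⟨_, hB2I _ ?_, rfl⟩
            rw [image_sigma_symmDiff, hsigC, image_sigma_pair, symmDiff_symmDiff_cancel_right]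
            exact hBC
        · have ha'' : a' ∈ symmDiff BA BC := by
            rw [Finset.mem_symmDiff] at ha' ⊢
            rw [mem_image_sigma, sigma_fix i a' hpi] at ha'
            exact ha'
          obtain ⟨b', hb', hbne', hA', hC'⟩ := hSE BA hBA BC hBC a' ha''
          rw [Finset.mem_sdiff] at hb'
          by_cases hbp : b'.1 = i
          · have hT2 : symmDiff ({a', jstar a'} : Finset (J n)) {(i, false), (i, true)}
                = {a', b', jstar a', jstar b'} := by
              rw [← pair_eq i b' hbp, symmDiff_pairs_disjoint a' b' (by rw [hbp]; exact hpi)]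
            have hKey1 : symmDiff (symmDiff BA {((i, false) : J n), (i, true)}) {a', jstar a'}
                = symmDiff BA ({a', b', jstar a', jstar b'} : Finset (J n)) := by
              rw [symmDiff_assoc,
                symmDiff_comm ({((i, false) : J n), (i, true)} : Finset (J n))
                  ({a', jstar a'} : Finset (J n)), hT2]
            have hKey2 : symmDiff (symmDiff BC {((i, false) : J n), (i, true)}) {a', jstar a'}
                = symmDiff BC ({a', b', jstar a', jstar b'} : Finset (J n)) := by
              rw [symmDiff_assoc,
                symmDiff_comm ({((i, false) : J n), (i, true)} : Finset (J n))
                  ({a', jstar a'} : Finset (J n)), hT2]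
            refine ⟨(Fin.last n, false), ?_, ?_, ?_, ?_⟩
            · rw [Finset.mem_sdiff, last_mem_insert_lift, last_mem_insert_lift]
              simp
            · rw [← jlift_jstar]
              exact last_ne_jlift false (jstar a')
            · rw [toggleLB, masterB, hsigA, hKey1]
              exact Set.mem_union_left _ ⟨_, hA', rfl⟩
            · rw [toggleLB, masterB]
              refine Set.mem_union_right _ ⟨_, hB2I _ ?_, rfl⟩
              rw [image_sigma_symmDiff, hsigC, image_sigma_pair2 i a' hpi, hKey2]
              exact hC'
          · refine ⟨jlift b', ?_, ?_, ?_, ?_⟩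
            · rw [Finset.mem_sdiff, mem_insert_lift, mem_insert_lift, mem_image_sigma,
                sigma_fix i b' hbp]
              exact hb'
            · rw [← jlift_jstar]
              exact fun h => hbne' (jlift_injective h)
            · rw [toggleLL, masterA]
              refine Set.mem_union_right _ ⟨_, hB2I _ ?_, rfl⟩
              rw [image_sigma_symmDiff, image_sigma_image_sigma, image_sigma_T i a' b' hpi hbp]
              exact hA'
            · rw [toggleLL, masterA]
              exact Set.mem_union_left _ ⟨_, hC', rfl⟩
      · obtain ⟨β, rfl⟩ : ∃ β, a = ((Fin.last n, β) : J (n+1)) := by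
          rcases hfa with rfl | rfl
          exacts [⟨true, rfl⟩, ⟨false, rfl⟩]
        obtain ⟨dA, hdA1, hdA2, hdA3⟩ := exists_pair_elt i (hfullA i)
        by_cases hd : dA ∈ BC
        · refine ⟨jlift dA, ?_, ?_, ?_, ?_⟩
          · rw [Finset.mem_sdiff, mem_insert_lift, mem_insert_lift, mem_image_sigma,
              sigma_eq_jstar i dA hdA1]
            exact ⟨hd, hdA3⟩
          · exact jlift_ne_last _ _
          · rw [toggleSB, masterB, pair_eq i dA hdA1, hsigA, symmDiff_symmDiff_cancel_right]
            exact Set.mem_union_left _ ⟨_, hBA, rfl⟩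
          · rw [toggleSB, masterB, pair_eq i dA hdA1]
            refine Set.mem_union_right _ ⟨_, hB2I _ ?_, rfl⟩
            rw [image_sigma_symmDiff, hsigC, image_sigma_pair, symmDiff_symmDiff_cancel_right]
            exact hBC
        · have hsd : dA ∈ symmDiff BA BC := Finset.mem_symmDiff.mpr (Or.inl ⟨hdA2, hd⟩)
          obtain ⟨b', hb', hbne', hA', hC'⟩ := hSE BA hBA BC hBC dA hsd
          rw [Finset.mem_sdiff] at hb'
          have hbp : b'.1 ≠ i := by
            intro hbp
            by_cases hbd : b' = dA
            · rw [hbd] at hb'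
              exact hd hb'.1
            · exact hbne' (fst_eq_ne b' dA (by rw [hbp]; exact hdA1.symm) hbd)
          have hT2 : symmDiff ({((i, false) : J n), (i, true)} : Finset (J n)) {b', jstar b'}
              = {dA, b', jstar dA, jstar b'} := by
            rw [← pair_eq i dA hdA1,
              symmDiff_pairs_disjoint dA b' (by rw [hdA1]; exact fun h => hbp h.symm)]
          have hKey1 : symmDiff (symmDiff BA {((i, false) : J n), (i, true)}) {b', jstar b'}
              = symmDiff BA ({dA, b', jstar dA, jstar b'} : Finset (J n)) := by
            rw [symmDiff_assoc, hT2]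
          have hKey2 : symmDiff (symmDiff BC {((i, false) : J n), (i, true)}) {b', jstar b'}
              = symmDiff BC ({dA, b', jstar dA, jstar b'} : Finset (J n)) := by
            rw [symmDiff_assoc, hT2]
          refine ⟨jlift b', ?_, ?_, ?_, ?_⟩
          · rw [Finset.mem_sdiff, mem_insert_lift, mem_insert_lift, mem_image_sigma,
              sigma_fix i b' hbp]
            exact hb'
          · exact jlift_ne_last _ _
          · rw [toggleSB, masterB, hsigA, hKey1]
            exact Set.mem_union_left _ ⟨_, hA', rfl⟩
          · rw [toggleSB, masterB]
            refine Set.mem_union_right _ ⟨_, hB2I _ ?_, rfl⟩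
            rw [image_sigma_symmDiff, hsigC, image_sigma_pair2 i b' hbp, hKey2]
            exact hC' 
    · -- CASE 4 : both from the 𝔅₂ side
      obtain ⟨BA, hBA, rfl⟩ := hDA
      obtain ⟨BC, hBC, rfl⟩ := hDC
      rcases symmDiff_insert_lift_cases ha with ⟨a', rfl, ha'⟩ | ⟨hne, -⟩
      · have ha'' : Equiv.swap ((i, false) : J n) (i, true) a' ∈ symmDiff BA BC := by
          rw [Finset.mem_symmDiff] at ha' ⊢
          rw [mem_image_sigma, mem_image_sigma] at ha'
          exact ha'
        obtain ⟨b'', hb'', hbne'', hA', hC'⟩ := hSE BA hBA BC hBC _ ha''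
        rw [Finset.mem_sdiff] at hb''
        refine ⟨jlift (Equiv.swap ((i, false) : J n) (i, true) b''), ?_, ?_, ?_, ?_⟩
        · rw [Finset.mem_sdiff, mem_insert_lift, mem_insert_lift,
            mem_image_sigma, mem_image_sigma, sigma_sigma]
          exact hb''
        · rw [← jlift_jstar]
          intro h
          apply hbne''
          have h1 := jlift_injective h
          rw [← sigma_sigma i b'', h1, sigma_jstar]
        · rw [toggleLL, masterA]
          refine Set.mem_union_right _ ⟨_, hB2I _ ?_, rfl⟩
          rw [image_sigma_symmDiff, image_sigma_image_sigma]
          have hT : (({a', Equiv.swap ((i, false) : J n) (i, true) b'', jstar a',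
              jstar (Equiv.swap ((i, false) : J n) (i, true) b'')} : Finset (J n))).image
                (Equiv.swap ((i, false) : J n) (i, true)) =
              {Equiv.swap ((i, false) : J n) (i, true) a', b'',
                jstar (Equiv.swap ((i, false) : J n) (i, true) a'), jstar b''} := by
            simp [Finset.image_insert, Finset.image_singleton, sigma_jstar, sigma_sigma]
          rw [hT]
          exact hA'
        · rw [toggleLL, masterA]
          refine Set.mem_union_right _ ⟨_, hB2I _ ?_, rfl⟩
          rw [image_sigma_symmDiff, image_sigma_image_sigma]
          have hT : (({a', Equiv.swap ((i, false) : J n) (i, true) b'', jstar a',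
              jstar (Equiv.swap ((i, false) : J n) (i, true) b'')} : Finset (J n))).image
                (Equiv.swap ((i, false) : J n) (i, true)) =
              {Equiv.swap ((i, false) : J n) (i, true) a', b'',
                jstar (Equiv.swap ((i, false) : J n) (i, true) a'), jstar b''} := by
            simp [Finset.image_insert, Finset.image_singleton, sigma_jstar, sigma_sigma]
          rw [hT]
          exact hC'
      · exact absurd rfl hne
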